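/- arXiv:2308.15026 — 3 statements merged into one kernel-verified Lean document; each statement's English description precedes it below -/
import Mathlib

section
/- For all r, s, t > 0 one has the explicit identity p_0^{(1)}(t,r,s) = (2t/π) / ((r²+s²+t²) · (1 - 4r²s²/(r²+s²+t²)²)); equivalently, p_0^{(1)}(t,r,s) = (2t/π) · (r²+s²+t²) / ((r²+s²+t²)² - 4r²s²). -/
open MeasureTheory Real Set Filter
open Topology

/-- Modified Bessel function of the first kind of order `ν`. -/
noncomputable def besselI (ν x : ℝ) : ℝ :=
  ∑' k : ℕ, (x / 2) ^ (2 * (k : ℝ) + ν) / ((Nat.factorial k : ℝ) * Real.Gamma ((k : ℝ) + ν + 1))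

/-- The Bessel heat kernel `p_ζ^{(2)}(t,r,s)`. -/
noncomputable def besselHeat (ζ t r s : ℝ) : ℝ :=
  (r * s) ^ ((1 : ℝ) / 2 - ζ) / (2 * t) * Real.exp (-(r ^ 2 + s ^ 2) / (4 * t)) *
    besselI (ζ - 1 / 2) (r * s / (2 * t))

/-- The `1/2`-stable (Lévy) subordinator density. -/
noncomputable def levyDensity (t τ : ℝ) : ℝ :=
  1 / (2 * Real.sqrt π) * t / τ ^ ((3 : ℝ) / 2) * Real.exp (-t ^ 2 / (4 * τ))

/-- The `1/2`-subordinated Bessel heat kernel `p_ζ^{(1)}(t,r,s)`. -/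
noncomputable def subKernel1 (ζ t r s : ℝ) : ℝ :=
  ∫ τ in Ioi (0 : ℝ), besselHeat ζ τ r s * levyDensity t τ

lemma gamma_half (k : ℕ) : Real.Gamma ((k:ℝ) + 1/2)
    = (Nat.factorial (2*k)) * Real.sqrt π / (4^k * Nat.factorial k) := by
  induction k with
  | zero => norm_num [Real.Gamma_one_half_eq, show (2:ℝ)⁻¹ = 1/2 by norm_num]
  | succ n ih =>
      have h : ((n:ℝ) + 1 + 1/2) = ((n:ℝ) + 1/2) + 1 := by ring
      rw [Nat.cast_add, Nat.cast_one, h, Real.Gamma_add_one (by positivity), ih]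
      have h2 : 2*(n+1) = (2*n+1) + 1 := by ring
      rw [h2, Nat.factorial_succ, Nat.factorial_succ, Nat.factorial_succ]
      push_cast
      have h4 : (4:ℝ)^(n+1) = 4 * 4^n := by ring
      rw [h4]
      field_simp
      ring


lemma besselI_neg_half {x : ℝ} (hx : 0 < x) :
    besselI ((0:ℝ) - 1/2) x = (x/2) ^ (-(1:ℝ)/2) / Real.sqrt π * Real.cosh x := by
  have hx2 : (0:ℝ) < x/2 := by linarith
  have hterm : ∀ k : ℕ,
      (x / 2) ^ (2 * (k : ℝ) + ((0:ℝ) - 1/2)) / ((Nat.factorial k : ℝ) * Real.Gamma ((k : ℝ) + ((0:ℝ) - 1/2) + 1))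
      = (x/2) ^ (-(1:ℝ)/2) / Real.sqrt π * (x ^ (2*k) / (Nat.factorial (2*k))) := by
    intro k
    have h1 : ((k:ℝ) + ((0:ℝ) - 1/2) + 1) = (k:ℝ) + 1/2 := by ring
    rw [h1, gamma_half]
    have h2 : (x / 2) ^ (2 * (k : ℝ) + ((0:ℝ) - 1/2))
        = (x/2) ^ (2*k : ℕ) * (x/2) ^ (-(1:ℝ)/2) := by
      rw [← Real.rpow_natCast (x/2) (2*k), ← Real.rpow_add hx2]
      congr 1
      push_cast
      ring
    rw [h2]
    have h3 : (x/2) ^ (2*k) = x ^ (2*k) / 4^k := by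
      rw [div_pow]
      congr 1
      rw [mul_comm 2 k, pow_mul, pow_right_comm]
      norm_num
    rw [h3]
    have hf1 : (0:ℝ) < (Nat.factorial k : ℝ) := by positivity
    have hf2 : (0:ℝ) < (Nat.factorial (2*k) : ℝ) := by positivity
    have hsp : (0:ℝ) < Real.sqrt π := Real.sqrt_pos.mpr Real.pi_pos
    have h4 : (0:ℝ) < (4:ℝ)^k := by positivity
    field_simp
  rw [besselI, tsum_congr hterm, tsum_mul_left, Real.cosh_eq_tsum]


lemma key_aux {b : ℝ} (hb : 0 < b) :
    IntegrableOn (fun τ => Real.exp (-(b/τ)) / τ^2) (Ioi (0:ℝ)) ∧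
    ∫ τ in Ioi (0:ℝ), Real.exp (-(b/τ)) / τ^2 = 1/b := by
  set g : ℝ → ℝ := fun τ => if τ ≤ 0 then 0 else Real.exp (-(b/τ)) / b with hg
  have hderiv : ∀ τ ∈ Ioi (0:ℝ), HasDerivAt g (Real.exp (-(b/τ)) / τ^2) τ := by
    intro τ hτ
    rw [mem_Ioi] at hτ
    have h1 : HasDerivAt (fun τ : ℝ => -(b/τ)) (b/τ^2) τ := by
      have := (hasDerivAt_inv (ne_of_gt hτ)).const_mul b
      convert this.neg using 1
      · rfl
      · rfl
      · funext y; simp [div_eq_mul_inv]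
      · ring
    have h2 : HasDerivAt (fun τ : ℝ => Real.exp (-(b/τ)) / b)
        (Real.exp (-(b/τ)) / τ^2) τ := by
      have := (h1.exp).div_const b
      convert this using 1
      · rfl
      · rfl
      · field_simp
    apply h2.congr_of_eventuallyEq
    filter_upwards [eventually_gt_nhds hτ] with y hy
    simp [hg, not_le.mpr hy]
  have hpos : ∀ τ ∈ Ioi (0:ℝ), 0 ≤ Real.exp (-(b/τ)) / τ^2 := by
    intro τ hτ; positivity
  have hcont : ContinuousWithinAt g (Ici 0) 0 := by
    rw [← Set.Ioi_insert, continuousWithinAt_insert_self]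
    have h0 : g 0 = 0 := by simp [hg]
    rw [ContinuousWithinAt, h0]
    have htend : Tendsto (fun τ : ℝ => Real.exp (-(b/τ)) / b) (𝓝[>] 0) (𝓝 0) := by
      have h1 : Tendsto (fun τ : ℝ => b/τ) (𝓝[>] 0) atTop := by
        simpa [div_eq_mul_inv] using tendsto_inv_nhdsGT_zero.const_mul_atTop hb
      have h2 : Tendsto (fun τ : ℝ => Real.exp (-(b/τ))) (𝓝[>] 0) (𝓝 0) := by
        exact Real.tendsto_exp_neg_atTop_nhds_zero.comp h1
      simpa using h2.div_const b
    refine htend.congr' ?_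
    filter_upwards [self_mem_nhdsWithin] with y hy
    simp [hg, not_le.mpr (show 0 < y from hy)]
  have hlim : Tendsto g atTop (𝓝 (1/b)) := by
    have h1 : Tendsto (fun τ : ℝ => b/τ) atTop (𝓝 0) := by
      simpa [div_eq_mul_inv] using tendsto_inv_atTop_zero.const_mul b
    have h2 : Tendsto (fun τ : ℝ => Real.exp (-(b/τ)) / b) atTop (𝓝 (1/b)) := by
      have h1n : Tendsto (fun τ : ℝ => -(b/τ)) atTop (𝓝 0) := by simpa using h1.neg
      have := (Real.continuous_exp.tendsto 0).comp h1n
      simpa [Function.comp] using this.div_const b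
    refine h2.congr' ?_
    filter_upwards [eventually_gt_atTop 0] with y hy
    simp [hg, not_le.mpr hy]
  constructor
  · exact integrableOn_Ioi_deriv_of_nonneg hcont hderiv hpos hlim
  · have := integral_Ioi_of_hasDerivAt_of_nonneg hcont hderiv hpos hlim
    simpa [hg] using this


lemma besselHeat_zero {τ r s : ℝ} (hτ : 0 < τ) (hr : 0 < r) (hs : 0 < s) :
    besselHeat 0 τ r s = 1/(2*Real.sqrt π * τ^((1:ℝ)/2)) *
      (Real.exp (-(r-s)^2/(4*τ)) + Real.exp (-(r+s)^2/(4*τ))) := by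
  have hrs : (0:ℝ) < r * s := mul_pos hr hs
  have hx : (0:ℝ) < r * s / (2 * τ) := by positivity
  have hsp : (0:ℝ) < Real.sqrt π := Real.sqrt_pos.mpr Real.pi_pos
  have htt : (0:ℝ) < τ^((1:ℝ)/2) := Real.rpow_pos_of_pos hτ _
  rw [besselHeat, besselI_neg_half hx,
    show r*s/(2*τ)/2 = r*s/(4*τ) from by ring, Real.cosh_eq]
  set E1 := Real.exp (-(r-s)^2/(4*τ)) with hE1def
  set E2 := Real.exp (-(r+s)^2/(4*τ)) with hE2def
  have hE1 : Real.exp (-(r^2+s^2)/(4*τ)) * Real.exp (r*s/(2*τ)) = E1 := by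
    rw [hE1def, ← Real.exp_add]; congr 1; field_simp; ring
  have hE2 : Real.exp (-(r^2+s^2)/(4*τ)) * Real.exp (-(r*s/(2*τ))) = E2 := by
    rw [hE2def, ← Real.exp_add]; congr 1; field_simp; ring
  have hA : (r*s)^((1:ℝ)/2 - 0) * (r*s/(4*τ))^(-(1:ℝ)/2) = 2 * τ^((1:ℝ)/2) := by
    rw [show (1:ℝ)/2 - 0 = 1/2 from by norm_num,
      show (-(1:ℝ)/2) = -((1:ℝ)/2) from by norm_num,
      Real.rpow_neg (by positivity), Real.div_rpow hrs.le (by positivity), inv_div]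
    have hne : (r*s)^((1:ℝ)/2) ≠ 0 := ne_of_gt (Real.rpow_pos_of_pos hrs _)
    rw [mul_comm, div_mul_cancel₀ _ hne, Real.mul_rpow (by norm_num) hτ.le]
    congr 1
    rw [show (4:ℝ) = 2^2 from by norm_num, ← Real.sqrt_eq_rpow, Real.sqrt_sq (by norm_num)]
  have hT : τ^((1:ℝ)/2) * τ^((1:ℝ)/2) = τ := by
    rw [← Real.rpow_add hτ]; norm_num
  have key : (r*s)^((1:ℝ)/2 - 0) / (2*τ) * Real.exp (-(r^2+s^2)/(4*τ)) *
      ((r*s/(4*τ))^(-(1:ℝ)/2) / Real.sqrt π *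
        ((Real.exp (r*s/(2*τ)) + Real.exp (-(r*s/(2*τ))))/2))
      = ((r*s)^((1:ℝ)/2 - 0) * (r*s/(4*τ))^(-(1:ℝ)/2)) *
        (Real.exp (-(r^2+s^2)/(4*τ)) * Real.exp (r*s/(2*τ)) +
         Real.exp (-(r^2+s^2)/(4*τ)) * Real.exp (-(r*s/(2*τ)))) / (4*τ*Real.sqrt π) := by
    ring
  set T := τ^((1:ℝ)/2) with hTdef
  rw [key, hA, hE1, hE2, ← hT]
  field_simp
  ring


theorem stmt6 :
    ∀ r s t : ℝ, 0 < r → 0 < s → 0 < t →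
      subKernel1 0 t r s
          = 2 * t / π /
            ((r ^ 2 + s ^ 2 + t ^ 2) * (1 - 4 * r ^ 2 * s ^ 2 / (r ^ 2 + s ^ 2 + t ^ 2) ^ 2)) ∧
        subKernel1 0 t r s
          = 2 * t / π * (r ^ 2 + s ^ 2 + t ^ 2) /
            ((r ^ 2 + s ^ 2 + t ^ 2) ^ 2 - 4 * r ^ 2 * s ^ 2) := by
  intro r s t hr hs ht
  have hπ : (0:ℝ) < π := Real.pi_pos
  set c1 : ℝ := ((r-s)^2 + t^2)/4 with hc1def
  set c2 : ℝ := ((r+s)^2 + t^2)/4 with hc2def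
  have hc1 : 0 < c1 := by positivity
  have hc2 : 0 < c2 := by positivity
  have hval : subKernel1 0 t r s = t/(4*π) * (1/c1 + 1/c2) := by
    have heq : ∀ τ ∈ Ioi (0:ℝ), besselHeat 0 τ r s * levyDensity t τ
        = t/(4*π) * (Real.exp (-(c1/τ))/τ^2 + Real.exp (-(c2/τ))/τ^2) := by
      intro τ hτ
      rw [mem_Ioi] at hτ
      rw [besselHeat_zero hτ hr hs, levyDensity]
      have hpp : τ^((1:ℝ)/2) * τ^((3:ℝ)/2) = τ^2 := by
        rw [← Real.rpow_add hτ]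
        norm_num
      have hsq : Real.sqrt π * Real.sqrt π = π := Real.mul_self_sqrt hπ.le
      set S := Real.sqrt π with hSdef
      have hE1 : Real.exp (-(r-s)^2/(4*τ)) * Real.exp (-t^2/(4*τ))
          = Real.exp (-(c1/τ)) := by
        rw [← Real.exp_add]; congr 1; rw [hc1def]; field_simp; ring
      have hE2 : Real.exp (-(r+s)^2/(4*τ)) * Real.exp (-t^2/(4*τ))
          = Real.exp (-(c2/τ)) := by
        rw [← Real.exp_add]; congr 1; rw [hc2def]; field_simp; ring
      have htt : (0:ℝ) < τ^((1:ℝ)/2) := Real.rpow_pos_of_pos hτ _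
      have htt3 : (0:ℝ) < τ^((3:ℝ)/2) := Real.rpow_pos_of_pos hτ _
      have hsp : (0:ℝ) < S := Real.sqrt_pos.mpr hπ
      have key : 1/(2*S * τ^((1:ℝ)/2)) *
            (Real.exp (-(r-s)^2/(4*τ)) + Real.exp (-(r+s)^2/(4*τ))) *
            (1 / (2 * S) * t / τ ^ ((3:ℝ)/2) * Real.exp (-t ^ 2 / (4 * τ)))
          = t / (4 * (S * S)) *
            ((Real.exp (-(r-s)^2/(4*τ)) * Real.exp (-t^2/(4*τ)) +
              Real.exp (-(r+s)^2/(4*τ)) * Real.exp (-t^2/(4*τ))) /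
              (τ^((1:ℝ)/2) * τ^((3:ℝ)/2))) := by
        field_simp
        ring
      rw [key, hpp, hsq, hE1, hE2]
      field_simp
    rw [subKernel1, setIntegral_congr_fun measurableSet_Ioi heq]
    rw [integral_const_mul, integral_add (key_aux hc1).1 (key_aux hc2).1,
      (key_aux hc1).2, (key_aux hc2).2]
  have hApos : (0:ℝ) < r^2 + s^2 + t^2 := by positivity
  have hD : (0:ℝ) < (r^2+s^2+t^2)^2 - 4*r^2*s^2 := by nlinarith [sq_nonneg (r-s), sq_nonneg (r+s), sq_nonneg t, mul_pos (mul_pos hr hs) ht]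
  constructor
  · rw [hval]
    rw [hc1def, hc2def]
    have h1 : (1 : ℝ) - 4 * r ^ 2 * s ^ 2 / (r ^ 2 + s ^ 2 + t ^ 2) ^ 2
        = ((r^2+s^2+t^2)^2 - 4*r^2*s^2) / (r^2+s^2+t^2)^2 := by
      field_simp
    rw [h1]
    rw [div_div_eq_mul_div]
    field_simp
    ring
  · rw [hval, hc1def, hc2def]
    field_simp
    ring
end

section
/- Let ζ ∈ (-1/2, ∞). For all r, s, t > 0, setting z := 4r²s²/(r²+s²+t²)² (which satisfies 0 ≤ z < 1 since t > 0), one has p_ζ^{(1)}(t,r,s) = (2Γ(ζ+1)/√π) · t · (r²+s²+t²)^{-(ζ+1)} · Σ_{k=0}^∞ ((ζ+1)/2)_k · ((ζ+2)/2)_k · z^k / (k! · Γ(ζ + 1/2 + k)), where (a)_k := a(a+1)⋯(a+k-1) denotes the Pochhammer symbol (rising factorial). -/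
open MeasureTheory Real Set Filter
open Topology

/-- The Pochhammer symbol (rising factorial) `(a)_k = a (a+1) ⋯ (a+k-1)`. -/
noncomputable def risingFactorial (a : ℝ) (k : ℕ) : ℝ := ∏ i ∈ Finset.range k, (a + i)

lemma rising_pos {a : ℝ} (ha : 0 < a) (k : ℕ) : 0 < risingFactorial a k :=
  Finset.prod_pos fun i _ => by positivity

lemma rising_succ (a : ℝ) (k : ℕ) :
    risingFactorial a (k + 1) = risingFactorial a k * (a + k) := Finset.prod_range_succ _ _

lemma gamma_add_nat {x : ℝ} (hx : 0 < x) (n : ℕ) :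
    Real.Gamma (x + n) = Real.Gamma x * risingFactorial x n := by
  induction n with
  | zero => simp [risingFactorial]
  | succ n ih =>
    have h1 : x + ((n : ℝ) + 1) = (x + n) + 1 := by ring
    rw [rising_succ, Nat.cast_add, Nat.cast_one, h1, Real.Gamma_add_one (by positivity), ih]
    ring

lemma rising_double (a : ℝ) (k : ℕ) :
    risingFactorial a (2 * k) =
      4 ^ k * risingFactorial (a / 2) k * risingFactorial ((a + 1) / 2) k := by
  induction k with
  | zero => simp [risingFactorial]
  | succ k ih =>
    have h2 : 2 * (k + 1) = (2 * k + 1) + 1 := by ring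
    rw [h2, rising_succ, rising_succ, rising_succ, rising_succ, ih]
    push_cast
    ring

lemma key_integrable {a m : ℝ} (ha : 0 < a) (hm : 0 < m) :
    IntegrableOn (fun τ : ℝ => τ ^ (-a - 1) * Real.exp (-(m / τ))) (Ioi 0) := by
  have hG : IntegrableOn (fun y : ℝ => y ^ (a - 1) * Real.exp (-(m * y))) (Ioi 0) := by
    have := integrableOn_rpow_mul_exp_neg_mul_rpow (s := a - 1) (p := 1) (b := m)
      (by linarith) one_pos hm
    simpa [Real.rpow_one, neg_mul] using this
  have hderiv : ∀ x ∈ Ioi (0:ℝ), HasDerivWithinAt (fun x : ℝ => x⁻¹) (-(x^2)⁻¹) (Ioi 0) x := by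
    intro x hx
    exact (hasDerivAt_inv (ne_of_gt hx)).hasDerivWithinAt.congr_deriv (by ring)
  have hinj : InjOn (fun x : ℝ => x⁻¹) (Ioi 0) := fun x hx y hy h => by
    simpa using inv_injective h
  have himg : (fun x : ℝ => x⁻¹) '' (Ioi 0) = Ioi 0 := by
    ext y; constructor
    · rintro ⟨x, hx, rfl⟩; exact mem_Ioi.mpr (inv_pos.mpr (mem_Ioi.mp hx))
    · intro hy; exact ⟨y⁻¹, mem_Ioi.mpr (inv_pos.mpr (mem_Ioi.mp hy)), by simp⟩
  have := (integrableOn_image_iff_integrableOn_abs_deriv_smul measurableSet_Ioi hderiv hinj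
    (fun y : ℝ => y ^ (a - 1) * Real.exp (-(m * y))))
  rw [himg] at this
  rw [this] at hG
  refine hG.congr_fun (fun x hx => ?_) measurableSet_Ioi
  have hx0 : (0:ℝ) < x := hx
  have h1 : |(-(x^2)⁻¹)| = x ^ (-2 : ℝ) := by
    rw [abs_neg, abs_inv, abs_of_pos (by positivity), ← Real.rpow_natCast x 2,
      ← Real.rpow_neg hx0.le]
    norm_num
  beta_reduce
  rw [smul_eq_mul, h1]
  have h2 : (x⁻¹) ^ (a - 1) = x ^ (-(a-1)) := by
    rw [← Real.rpow_neg_one x, ← Real.rpow_mul hx0.le]; ring_nf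
  rw [h2, show m * x⁻¹ = m / x from (div_eq_mul_inv m x).symm, ← mul_assoc,
    ← Real.rpow_add hx0]
  ring_nf

lemma key_integral {a m : ℝ} (ha : 0 < a) (hm : 0 < m) :
    ∫ τ : ℝ in Ioi 0, τ ^ (-a - 1) * Real.exp (-(m / τ)) = (1 / m) ^ a * Real.Gamma a := by
  rw [← integral_rpow_mul_exp_neg_mul_Ioi ha hm,
    ← integral_comp_rpow_Ioi (fun y : ℝ => y ^ (a - 1) * Real.exp (-(m * y)))
      (p := -1) (by norm_num)]
  refine setIntegral_congr_fun measurableSet_Ioi (fun x hx => ?_)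
  have hx0 : (0:ℝ) < x := hx
  have h2 : (x ^ (-1:ℝ)) ^ (a - 1) = x ^ (-(a-1)) := by
    rw [← Real.rpow_mul hx0.le]; ring_nf
  rw [smul_eq_mul, h2, show m * x ^ (-1:ℝ) = m / x by rw [Real.rpow_neg_one]; ring]
  rw [show (-1:ℝ) - 1 = -2 by norm_num, ← mul_assoc]
  rw [show |(-1:ℝ)| * x ^ (-2:ℝ) * x ^ (-(a-1)) = x ^ (-2:ℝ) * x ^ (-(a-1)) by
    rw [abs_neg, abs_one, one_mul], ← Real.rpow_add hx0]
  ring_nf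

lemma tendsto_shift_ratio (a b : ℝ) :
    Tendsto (fun k : ℕ => (a + k) / (b + k)) atTop (𝓝 1) := by
  have h0 : Tendsto (fun k : ℕ => (a / k + 1) / (b / k + 1)) atTop (𝓝 1) := by
    have ha : Tendsto (fun k : ℕ => a / k + 1) atTop (𝓝 1) := by
      simpa using (tendsto_const_div_atTop_nhds_zero_nat a).add tendsto_const_nhds
    have hb : Tendsto (fun k : ℕ => b / k + 1) atTop (𝓝 1) := by
      simpa using (tendsto_const_div_atTop_nhds_zero_nat b).add tendsto_const_nhds
    have h := ha.div hb one_ne_zero; rw [div_one] at h; exact h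
  refine h0.congr' ?_
  have hev : ∀ᶠ k : ℕ in atTop, max 1 (-b + 1) ≤ (k : ℝ) :=
    tendsto_natCast_atTop_atTop.eventually_ge_atTop _
  filter_upwards [hev] with k hk
  have hk0 : (0:ℝ) < k := lt_of_lt_of_le zero_lt_one (le_trans (le_max_left _ _) hk)
  have hkb : (0:ℝ) < b + k := by
    have := le_trans (le_max_right _ _) hk; linarith
  have hd : (0:ℝ) < b / k + 1 := by
    have : b / (k:ℝ) + 1 = (b + k) / k := by field_simp
    rw [this]; positivity
  rw [div_eq_div_iff hd.ne' hkb.ne']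
  field_simp

lemma summable_aux {ζ z : ℝ} (hζ : -1/2 < ζ) (hz0 : 0 < z) (hz1 : z < 1) :
    Summable (fun k : ℕ => risingFactorial ((ζ + 1) / 2) k * risingFactorial ((ζ + 2) / 2) k *
      z ^ k / ((Nat.factorial k : ℝ) * Real.Gamma (ζ + 1 / 2 + k))) := by
  set u : ℕ → ℝ := fun k => risingFactorial ((ζ + 1) / 2) k * risingFactorial ((ζ + 2) / 2) k *
      z ^ k / ((Nat.factorial k : ℝ) * Real.Gamma (ζ + 1 / 2 + k)) with hu
  have ha1 : (0:ℝ) < (ζ + 1) / 2 := by linarith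
  have ha2 : (0:ℝ) < (ζ + 2) / 2 := by linarith
  have hC : ∀ k : ℕ, (0:ℝ) < ζ + 1 / 2 + k := fun k => by
    have : (0:ℝ) ≤ k := Nat.cast_nonneg k; linarith
  have hG : ∀ k : ℕ, 0 < Real.Gamma (ζ + 1 / 2 + k) := fun k =>
    Real.Gamma_pos_of_pos (hC k)
  have hupos : ∀ k, 0 < u k := by
    intro k
    have h3 := rising_pos ha1 k; have h4 := rising_pos ha2 k
    have h1 : (0:ℝ) < (Nat.factorial k : ℝ) := by positivity
    have h2 := hG k
    positivity
  have hstep : ∀ k : ℕ, u (k + 1) =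
      u k * (((ζ + 1) / 2 + k) * ((ζ + 2) / 2 + k) * z) / ((1 + k) * (ζ + 1 / 2 + k)) := by
    intro k
    have h1 : (0:ℝ) < (Nat.factorial k : ℝ) := by positivity
    have h2 := hG k
    have h5 := hC k
    have h6 : (0:ℝ) < 1 + (k:ℝ) := by positivity
    rw [hu]
    simp only
    rw [rising_succ, rising_succ, Nat.factorial_succ,
      show (ζ + 1 / 2 + ((k:ℕ)+1:ℕ) : ℝ) = (ζ + 1 / 2 + k) + 1 by push_cast; ring,
      Real.Gamma_add_one h5.ne', pow_succ]
    push_cast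
    field_simp
    ring
  have hratio : ∀ k : ℕ, ‖u (k+1)‖ / ‖u k‖ =
      ((ζ + 1) / 2 + k) * ((ζ + 2) / 2 + k) * z / ((1 + k) * (ζ + 1 / 2 + k)) := by
    intro k
    rw [Real.norm_of_nonneg (hupos _).le, Real.norm_of_nonneg (hupos _).le, hstep k,
      div_div, mul_comm ((1 + (k:ℝ)) * (ζ + 1 / 2 + k)) (u k), ← div_div,
      mul_comm (u k), mul_div_assoc, div_self (hupos k).ne', mul_one]
  refine summable_of_ratio_test_tendsto_lt_one hz1
    (Eventually.of_forall fun n => (hupos n).ne') ?_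
  have hT : Tendsto (fun k : ℕ =>
      ((ζ + 1) / 2 + k) / (1 + k) * (((ζ + 2) / 2 + k) / (ζ + 1 / 2 + k)) * z) atTop (𝓝 z) := by
    have := (((tendsto_shift_ratio ((ζ+1)/2) 1).mul
      (tendsto_shift_ratio ((ζ+2)/2) (ζ+1/2)))).mul (tendsto_const_nhds (x := z))
    simpa using this
  refine Tendsto.congr (fun k => ?_) hT
  rw [hratio k, div_mul_div_comm, div_mul_eq_mul_div]

set_option maxHeartbeats 1000000 in
theorem stmt7 (ζ : ℝ) (hζ : -1/2 < ζ) :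
    ∀ r s t : ℝ, 0 < r → 0 < s → 0 < t →
      0 ≤ 4 * r ^ 2 * s ^ 2 / (r ^ 2 + s ^ 2 + t ^ 2) ^ 2 ∧
        4 * r ^ 2 * s ^ 2 / (r ^ 2 + s ^ 2 + t ^ 2) ^ 2 < 1 ∧
        subKernel1 ζ t r s
          = 2 * Real.Gamma (ζ + 1) / Real.sqrt π * t * (r ^ 2 + s ^ 2 + t ^ 2) ^ (-(ζ + 1)) *
            ∑' k : ℕ, risingFactorial ((ζ + 1) / 2) k * risingFactorial ((ζ + 2) / 2) k *
              (4 * r ^ 2 * s ^ 2 / (r ^ 2 + s ^ 2 + t ^ 2) ^ 2) ^ k /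
              ((Nat.factorial k : ℝ) * Real.Gamma (ζ + 1 / 2 + k)) := by
  intro r s t hr hs ht
  have hS : (0:ℝ) < r ^ 2 + s ^ 2 + t ^ 2 := by positivity
  have hz0 : (0:ℝ) < 4 * r ^ 2 * s ^ 2 / (r ^ 2 + s ^ 2 + t ^ 2) ^ 2 := by positivity
  have hz1 : 4 * r ^ 2 * s ^ 2 / (r ^ 2 + s ^ 2 + t ^ 2) ^ 2 < 1 := by
    rw [div_lt_one (by positivity)]
    nlinarith [mul_pos (show (0:ℝ) < (r-s)^2 + t^2 by positivity)
      (show (0:ℝ) < (r+s)^2 + t^2 by positivity)]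
  refine ⟨hz0.le, hz1, ?_⟩
  have hrs : (0:ℝ) < r * s := by positivity
  have hm : (0:ℝ) < (r ^ 2 + s ^ 2 + t ^ 2) / 4 := by positivity
  have hπ : (0:ℝ) < Real.sqrt π := Real.sqrt_pos.mpr Real.pi_pos
  have ha : ∀ k : ℕ, (0:ℝ) < 2 * (k:ℝ) + ζ + 1 := fun k => by
    have : (0:ℝ) ≤ k := Nat.cast_nonneg k; linarith
  have hGk : ∀ k : ℕ, 0 < Real.Gamma (ζ + 1 / 2 + k) := fun k => by
    refine Real.Gamma_pos_of_pos ?_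
    have : (0:ℝ) ≤ k := Nat.cast_nonneg k; linarith
  set A : ℕ → ℝ := fun k =>
    (r * s) ^ (2 * (k:ℝ)) * (4:ℝ) ^ (-(2 * (k:ℝ) + (ζ - 1/2))) * t / (4 * Real.sqrt π) /
      ((Nat.factorial k : ℝ) * Real.Gamma (ζ + 1/2 + k)) with hA_def
  set g : ℕ → ℝ → ℝ := fun k τ =>
    A k * (τ ^ (-(2 * (k:ℝ) + ζ + 1) - 1) *
      Real.exp (-(((r ^ 2 + s ^ 2 + t ^ 2) / 4) / τ))) with hg_def
  have hApos : ∀ k, 0 < A k := by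
    intro k
    have h1 := hGk k
    have h2 : (0:ℝ) < (Nat.factorial k : ℝ) := by positivity
    rw [hA_def]
    have h3 : (0:ℝ) < (r * s) ^ (2 * (k:ℝ)) := Real.rpow_pos_of_pos hrs _
    have h4 : (0:ℝ) < (4:ℝ) ^ (-(2 * (k:ℝ) + (ζ - 1/2))) := Real.rpow_pos_of_pos (by norm_num) _
    positivity
  -- pointwise expansion of the integrand as a series
  have hpt : ∀ τ ∈ Ioi (0:ℝ), besselHeat ζ τ r s * levyDensity t τ = ∑' k, g k τ := by
    intro τ hτ
    have hτ0 : (0:ℝ) < τ := hτ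
    have hcomm : ∀ a b c X : ℝ, a * b * X * c = a * b * c * X := by intros; ring
    simp only [besselHeat, levyDensity, besselI]
    rw [hcomm, ← tsum_mul_left]
    refine tsum_congr fun k => ?_
    have hsplit : (r * s / (2 * τ) / 2) ^ (2 * (k:ℝ) + (ζ - 1/2)) =
        (r * s) ^ (2 * (k:ℝ) + (ζ - 1/2)) * (4:ℝ) ^ (-(2 * (k:ℝ) + (ζ - 1/2))) *
          τ ^ (-(2 * (k:ℝ) + (ζ - 1/2))) := by
      rw [show r * s / (2 * τ) / 2 = r * s / (4 * τ) by ring,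
        Real.div_rpow hrs.le (by positivity), Real.mul_rpow (by norm_num) hτ0.le,
        Real.rpow_neg (by norm_num : (0:ℝ) ≤ 4), Real.rpow_neg hτ0.le,
        div_eq_mul_inv, mul_inv]
      ring
    have hG : Real.Gamma ((k:ℝ) + (ζ - 1/2) + 1) = Real.Gamma (ζ + 1/2 + k) := by
      congr 1; ring
    rw [hsplit, hG, hg_def, hA_def]
    simp only
    rw [show (r * s) ^ (2 * (k:ℝ)) =
        (r * s) ^ ((1:ℝ)/2 - ζ) * (r * s) ^ (2 * (k:ℝ) + (ζ - 1/2)) by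
      rw [← Real.rpow_add hrs]; congr 1; ring]
    rw [show Real.exp (-(((r ^ 2 + s ^ 2 + t ^ 2) / 4) / τ)) =
        Real.exp (-(r ^ 2 + s ^ 2) / (4 * τ)) * Real.exp (-t ^ 2 / (4 * τ)) by
      rw [← Real.exp_add]; congr 1; field_simp; ring]
    rw [show τ ^ (-(2 * (k:ℝ) + ζ + 1) - 1) =
        τ ^ (-(2 * (k:ℝ) + (ζ - 1/2))) * τ⁻¹ * (τ ^ ((3:ℝ)/2))⁻¹ by
      rw [← Real.rpow_neg_one τ, ← Real.rpow_neg hτ0.le ((3:ℝ)/2),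
        ← Real.rpow_add hτ0, ← Real.rpow_add hτ0]
      congr 1; ring]
    ring
  have hInt : ∀ k : ℕ, IntegrableOn (fun τ => g k τ) (Ioi (0:ℝ)) := by
    intro k
    exact (key_integrable (ha k) hm).const_mul (A k)
  have hval : ∀ k : ℕ, ∫ τ in Ioi (0:ℝ), g k τ =
      A k * ((1 / ((r ^ 2 + s ^ 2 + t ^ 2) / 4)) ^ (2 * (k:ℝ) + ζ + 1) *
        Real.Gamma (2 * (k:ℝ) + ζ + 1)) := by
    intro k
    rw [hg_def]
    simp only
    rw [MeasureTheory.integral_const_mul, key_integral (ha k) hm]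
  -- per-term closed form
  have hk_id : ∀ k : ℕ,
      A k * ((1 / ((r ^ 2 + s ^ 2 + t ^ 2) / 4)) ^ (2 * (k:ℝ) + ζ + 1) *
        Real.Gamma (2 * (k:ℝ) + ζ + 1)) =
      2 * Real.Gamma (ζ + 1) / Real.sqrt π * t * (r ^ 2 + s ^ 2 + t ^ 2) ^ (-(ζ + 1)) *
        (risingFactorial ((ζ + 1) / 2) k * risingFactorial ((ζ + 2) / 2) k *
          (4 * r ^ 2 * s ^ 2 / (r ^ 2 + s ^ 2 + t ^ 2) ^ 2) ^ k /
          ((Nat.factorial k : ℝ) * Real.Gamma (ζ + 1 / 2 + k))) := by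
    intro k
    have hGam : Real.Gamma (2 * (k:ℝ) + ζ + 1) =
        Real.Gamma (ζ + 1) * (4 ^ k * risingFactorial ((ζ + 1) / 2) k *
          risingFactorial ((ζ + 2) / 2) k) := by
      rw [show 2 * (k:ℝ) + ζ + 1 = (ζ + 1) + ((2 * k : ℕ) : ℝ) by push_cast; ring,
        gamma_add_nat (by linarith), rising_double,
        show (ζ + 1 + 1) / 2 = (ζ + 2) / 2 by ring]
    have hk16 : (4:ℝ) ^ (2 * (k:ℝ)) = 16 ^ k := by
      rw [show (2 * (k:ℝ)) = ((2 * k : ℕ) : ℝ) by push_cast; ring,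
        Real.rpow_natCast, pow_mul]
      norm_num
    have hpow1 : (1 / ((r ^ 2 + s ^ 2 + t ^ 2) / 4)) ^ (2 * (k:ℝ) + ζ + 1) =
        (4:ℝ) * (4:ℝ) ^ ζ * 16 ^ k * ((r ^ 2 + s ^ 2 + t ^ 2) ^ (-(ζ + 1)) *
          (((r ^ 2 + s ^ 2 + t ^ 2) ^ 2) ^ k)⁻¹) := by
      rw [one_div_div, Real.div_rpow (by norm_num) hS.le,
        show (2 * (k:ℝ) + ζ + 1) = ((1:ℝ) + ζ) + 2 * (k:ℝ) by ring,
        Real.rpow_add (by norm_num : (0:ℝ) < 4),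
        Real.rpow_add (by norm_num : (0:ℝ) < 4) 1 ζ, Real.rpow_one, hk16,
        div_eq_mul_inv, ← Real.rpow_neg hS.le,
        show -((1:ℝ) + ζ + 2 * (k:ℝ)) = -(ζ + 1) + -(2 * (k:ℝ)) by ring,
        Real.rpow_add hS, Real.rpow_neg hS.le (2 * (k:ℝ)),
        show (2 * (k:ℝ)) = ((2 * k : ℕ) : ℝ) by push_cast; ring,
        Real.rpow_natCast (r ^ 2 + s ^ 2 + t ^ 2), pow_mul]
    have h44 : (4:ℝ) ^ (-(2 * (k:ℝ) + (ζ - 1/2))) = 2 * ((4:ℝ) ^ ζ)⁻¹ * ((16:ℝ) ^ k)⁻¹ := by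
      rw [show -(2 * (k:ℝ) + (ζ - 1/2)) = ((1:ℝ)/2 + -ζ) + -(2 * (k:ℝ)) by ring,
        Real.rpow_add (by norm_num : (0:ℝ) < 4),
        Real.rpow_add (by norm_num : (0:ℝ) < 4) (1/2) (-ζ),
        Real.rpow_neg (by norm_num : (0:ℝ) ≤ 4) ζ,
        Real.rpow_neg (by norm_num : (0:ℝ) ≤ 4) (2 * (k:ℝ)), hk16,
        show (4:ℝ) ^ ((1:ℝ)/2) = 2 by
          rw [show (4:ℝ) = (2:ℝ) ^ (2:ℕ) by norm_num, ← Real.rpow_natCast 2 2,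
            ← Real.rpow_mul (by norm_num : (0:ℝ) ≤ 2)]
          norm_num]
    have hrs3 : (r * s) ^ (2 * (k:ℝ)) = (r ^ 2 * s ^ 2) ^ k := by
      rw [show (2 * (k:ℝ)) = ((2 * k : ℕ) : ℝ) by push_cast; ring,
        Real.rpow_natCast, pow_mul, mul_pow]
    have hzk : (4 * r ^ 2 * s ^ 2 / (r ^ 2 + s ^ 2 + t ^ 2) ^ 2) ^ k =
        4 ^ k * (r ^ 2 * s ^ 2) ^ k * (((r ^ 2 + s ^ 2 + t ^ 2) ^ 2) ^ k)⁻¹ := by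
      rw [div_pow, show (4 * r ^ 2 * s ^ 2) = 4 * (r ^ 2 * s ^ 2) by ring, mul_pow,
        div_eq_mul_inv]
    rw [hA_def]
    simp only
    rw [hGam, hpow1, hrs3, hzk]
    have hAA : (4:ℝ) ^ (-(2 * (k:ℝ) + (ζ - 1/2))) * (4 * (4:ℝ) ^ ζ * 16 ^ k) = 8 := by
      rw [h44]
      have h3 : ((4:ℝ) ^ ζ) ≠ 0 := (Real.rpow_pos_of_pos (by norm_num) ζ).ne'
      have h5 : ((16:ℝ) ^ k : ℝ) ≠ 0 := by positivity
      field_simp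
      ring
    linear_combination ((r ^ 2 * s ^ 2) ^ k * t / (4 * Real.sqrt π) /
      ((Nat.factorial k : ℝ) * Real.Gamma (ζ + 1/2 + k)) *
      ((r ^ 2 + s ^ 2 + t ^ 2) ^ (-(ζ + 1)) * (((r ^ 2 + s ^ 2 + t ^ 2) ^ 2) ^ k)⁻¹) *
      (Real.Gamma (ζ + 1) * (4 ^ k * risingFactorial ((ζ + 1) / 2) k *
        risingFactorial ((ζ + 2) / 2) k))) * hAA
  have hnorm : ∀ k : ℕ, ∫ τ in Ioi (0:ℝ), ‖g k τ‖ = ∫ τ in Ioi (0:ℝ), g k τ := by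
    intro k
    refine setIntegral_congr_fun measurableSet_Ioi fun τ hτ => ?_
    have hτ0 : (0:ℝ) < τ := hτ
    have hg0 : 0 ≤ g k τ := by
      rw [hg_def]
      simp only
      have h1 := (hApos k).le
      have h2 : (0:ℝ) < τ ^ (-(2 * (k:ℝ) + ζ + 1) - 1) := Real.rpow_pos_of_pos hτ0 _
      positivity
    exact Real.norm_of_nonneg hg0
  have hsum_u : Summable (fun k : ℕ => risingFactorial ((ζ + 1) / 2) k *
      risingFactorial ((ζ + 2) / 2) k * (4 * r ^ 2 * s ^ 2 / (r ^ 2 + s ^ 2 + t ^ 2) ^ 2) ^ k /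
      ((Nat.factorial k : ℝ) * Real.Gamma (ζ + 1 / 2 + k))) := summable_aux hζ hz0 hz1
  have hsum_v : Summable (fun k : ℕ => ∫ τ in Ioi (0:ℝ), ‖g k τ‖) := by
    refine (hsum_u.mul_left (2 * Real.Gamma (ζ + 1) / Real.sqrt π * t *
      (r ^ 2 + s ^ 2 + t ^ 2) ^ (-(ζ + 1)))).congr fun k => ?_
    rw [hnorm k, hval k, hk_id k]
  have key := MeasureTheory.hasSum_integral_of_summable_integral_norm hInt hsum_v
  have hsub : subKernel1 ζ t r s = ∫ τ in Ioi (0:ℝ), ∑' k, g k τ := by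
    unfold subKernel1
    exact setIntegral_congr_fun measurableSet_Ioi hpt
  rw [hsub, ← key.tsum_eq, ← tsum_mul_left]
  exact tsum_congr fun k => by rw [hval k, hk_id k]
end

section
/- Let ζ ∈ (-1/2, ∞) and α ∈ (0,2]. Then for every t > 0 the integral operator with kernel p_ζ^{(α)}(t,·,·) is a contraction on L²((0,∞), s^{2ζ} ds); that is, for every f ∈ L²((0,∞), s^{2ζ} ds), ∫_0^∞ |∫_0^∞ p_ζ^{(α)}(t,r,s) f(s) s^{2ζ} ds|² r^{2ζ} dr ≤ ∫_0^∞ |f(s)|² s^{2ζ} ds. -/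
open MeasureTheory Real Set Filter

lemma bessel_summable (ν x : ℝ) : Summable (fun k : ℕ =>
    (x / 2) ^ (2 * (k : ℝ) + ν) / ((Nat.factorial k : ℝ) * Real.Gamma ((k : ℝ) + ν + 1))) := by
  rcases eq_or_ne x 0 with rfl | hx
  · rw [← summable_nat_add_iff (⌈|ν|⌉₊ + 1)]
    have h0 : ∀ n : ℕ, ((0:ℝ) / 2) ^ (2 * ((n + (⌈|ν|⌉₊ + 1) : ℕ) : ℝ) + ν) /
        ((Nat.factorial (n + (⌈|ν|⌉₊ + 1)) : ℝ) * Real.Gamma (((n + (⌈|ν|⌉₊ + 1) : ℕ) : ℝ) + ν + 1)) = 0 := by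
      intro n
      rw [zero_div, Real.zero_rpow, zero_div]
      have h1 : |ν| ≤ (⌈|ν|⌉₊ : ℝ) := Nat.le_ceil _
      have h2 : -ν ≤ |ν| := neg_le_abs ν
      have h3 : (0:ℝ) ≤ (n : ℝ) := Nat.cast_nonneg n
      have : (0:ℝ) < 2 * ((n + (⌈|ν|⌉₊ + 1) : ℕ) : ℝ) + ν := by push_cast; linarith
      exact ne_of_gt this
    exact summable_zero.congr (fun n => (h0 n).symm)
  · have ha : 0 < |x| / 2 := by positivity
    apply Summable.of_norm_bounded_eventually
      (g := fun k : ℕ => (|x| / 2) ^ ν * (((|x| / 2) ^ 2) ^ k / (Nat.factorial k : ℝ)))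
    · exact (Real.summable_pow_div_factorial _).mul_left _
    · rw [Nat.cofinite_eq_atTop]
      filter_upwards [eventually_ge_atTop (⌈|ν| + 1⌉₊)] with k hk
      have hk' : |ν| + 1 ≤ (k : ℝ) := le_trans (Nat.le_ceil _) (by exact_mod_cast hk)
      have hG2 : (2:ℝ) ≤ (k : ℝ) + ν + 1 := by
        have := neg_abs_le ν; linarith
      have hG1 : (1:ℝ) ≤ Real.Gamma ((k : ℝ) + ν + 1) :=
        calc (1:ℝ) = Real.Gamma 2 := Real.Gamma_two.symm
        _ ≤ _ := Real.Gamma_strictMonoOn_Ici.monotoneOn (by norm_num) hG2 hG2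
      have hfac : (1:ℝ) ≤ (Nat.factorial k : ℝ) := by
        exact_mod_cast Nat.one_le_iff_ne_zero.mpr (Nat.factorial_ne_zero k)
      rw [norm_div, Real.norm_eq_abs, Real.norm_eq_abs]
      have e1 : (|x| / 2) ^ (2 * (k : ℝ)) = ((|x| / 2) ^ 2) ^ k := by
        rw [show ((|x|/2):ℝ) ^ (2:ℕ) = (|x|/2) ^ ((2:ℕ):ℝ) from (Real.rpow_natCast _ 2).symm,
          ← Real.rpow_natCast ((|x|/2) ^ ((2:ℕ):ℝ)) k, ← Real.rpow_mul ha.le]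
        norm_num
      have hnum : |(x / 2) ^ (2 * (k : ℝ) + ν)| ≤ (|x| / 2) ^ ν * ((|x| / 2) ^ 2) ^ k := by
        calc |(x / 2) ^ (2 * (k : ℝ) + ν)| ≤ |x / 2| ^ (2 * (k : ℝ) + ν) :=
              Real.abs_rpow_le_abs_rpow _ _
        _ = (|x| / 2) ^ (2 * (k : ℝ) + ν) := by rw [abs_div, abs_two]
        _ = (|x| / 2) ^ (2 * (k : ℝ)) * (|x| / 2) ^ ν := Real.rpow_add ha _ _
        _ = (|x| / 2) ^ ν * ((|x| / 2) ^ 2) ^ k := by rw [e1, mul_comm]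
      have hden : (Nat.factorial k : ℝ) ≤ |(Nat.factorial k : ℝ) * Real.Gamma ((k : ℝ) + ν + 1)| := by
        rw [abs_of_nonneg (by positivity)]
        nlinarith
      calc |(x / 2) ^ (2 * (k : ℝ) + ν)| / |(Nat.factorial k : ℝ) * Real.Gamma ((k : ℝ) + ν + 1)|
          ≤ ((|x| / 2) ^ ν * ((|x| / 2) ^ 2) ^ k) / (Nat.factorial k : ℝ) :=
            div_le_div₀ (by positivity) hnum (by positivity) hden
        _ = (|x| / 2) ^ ν * (((|x| / 2) ^ 2) ^ k / (Nat.factorial k : ℝ)) := mul_div_assoc _ _ _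

lemma besselI_nonneg {ν x : ℝ} (hν : -1 < ν) (hx : 0 ≤ x) : 0 ≤ besselI ν x := by
  apply tsum_nonneg
  intro k
  have h1 : (0:ℝ) < (k : ℝ) + ν + 1 := by
    have : (0:ℝ) ≤ (k : ℝ) := Nat.cast_nonneg k
    linarith
  have := (Real.Gamma_pos_of_pos h1).le
  apply div_nonneg (Real.rpow_nonneg (by positivity) _)
  positivity

lemma measurable_besselI (ν : ℝ) : Measurable (besselI ν) := by
  apply measurable_of_tendsto_metrizable
    (f := fun n x => ∑ k ∈ Finset.range n,
      (x / 2) ^ (2 * (k : ℝ) + ν) / ((Nat.factorial k : ℝ) * Real.Gamma ((k : ℝ) + ν + 1)))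
  · intro n
    apply Finset.measurable_sum
    intro k _
    fun_prop
  · rw [tendsto_pi_nhds]
    intro x
    exact ((bessel_summable ν x).hasSum).tendsto_sum_nat

lemma besselHeat_nonneg {ζ t r s : ℝ} (hζ : -1/2 < ζ) (ht : 0 < t) (hr : 0 ≤ r) (hs : 0 ≤ s) :
    0 ≤ besselHeat ζ t r s := by
  unfold besselHeat
  have h1 : 0 ≤ besselI (ζ - 1/2) (r * s / (2 * t)) :=
    besselI_nonneg (by linarith) (by positivity)
  have h2 : (0:ℝ) ≤ (r * s) ^ ((1:ℝ)/2 - ζ) := Real.rpow_nonneg (by positivity) _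
  positivity

lemma besselHeat_symm (ζ t r s : ℝ) : besselHeat ζ t r s = besselHeat ζ t s r := by
  unfold besselHeat
  rw [mul_comm r s, add_comm (r ^ 2) (s ^ 2)]

lemma measurable_besselHeat (ζ : ℝ) :
    Measurable (fun q : ℝ × ℝ × ℝ => besselHeat ζ q.1 q.2.1 q.2.2) := by
  unfold besselHeat
  refine Measurable.mul (Measurable.mul ?_ ?_) ?_
  · fun_prop
  · fun_prop
  · exact (measurable_besselI _).comp (by fun_prop)

section
variable {ζ t r : ℝ}

/-- coefficient -/
noncomputable def Dk (ζ t r : ℝ) (k : ℕ) : ℝ :=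
  1 / (2 * t) * Real.exp (-(r ^ 2 / (4 * t))) * r ^ ((1:ℝ) / 2 - ζ) *
    (r / (4 * t)) ^ (2 * (k : ℝ) + (ζ - 1 / 2)) /
    ((Nat.factorial k : ℝ) * Real.Gamma ((k : ℝ) + (ζ - 1 / 2) + 1))

noncomputable def gk (ζ t : ℝ) (k : ℕ) (s : ℝ) : ℝ :=
  s ^ (2 * (k : ℝ) + 2 * ζ) * Real.exp (-(1 / (4 * t)) * s ^ 2)

lemma Gamma_pos' (hζ : -1/2 < ζ) (k : ℕ) : 0 < Real.Gamma ((k : ℝ) + (ζ - 1 / 2) + 1) := by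
  apply Real.Gamma_pos_of_pos
  have : (0:ℝ) ≤ (k : ℝ) := Nat.cast_nonneg k
  linarith

lemma Dk_nonneg (hζ : -1/2 < ζ) (ht : 0 < t) (hr : 0 < r) (k : ℕ) : 0 ≤ Dk ζ t r k := by
  have h1 := Gamma_pos' hζ k
  have h2 : (0:ℝ) ≤ r ^ ((1:ℝ)/2 - ζ) := Real.rpow_nonneg hr.le _
  have h3 : (0:ℝ) ≤ (r / (4*t)) ^ (2 * (k : ℝ) + (ζ - 1/2)) := Real.rpow_nonneg (by positivity) _
  have h4 : (0:ℝ) < (Nat.factorial k : ℝ) := by positivity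
  unfold Dk
  positivity

lemma gk_nonneg (k : ℕ) {s : ℝ} (hs : 0 ≤ s) : 0 ≤ gk ζ t k s := by
  unfold gk
  have := Real.rpow_nonneg hs (2 * (k : ℝ) + 2 * ζ)
  positivity

lemma hterm (hζ : -1/2 < ζ) (ht : 0 < t) (hr : 0 < r) {s : ℝ} (hs : 0 < s) (k : ℕ) :
    (r * s) ^ ((1 : ℝ) / 2 - ζ) / (2 * t) * Real.exp (-(r ^ 2 + s ^ 2) / (4 * t)) * s ^ (2 * ζ) *
      ((r * s / (2 * t) / 2) ^ (2 * (k : ℝ) + (ζ - 1 / 2)) /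
        ((Nat.factorial k : ℝ) * Real.Gamma ((k : ℝ) + (ζ - 1 / 2) + 1)))
    = Dk ζ t r k * gk ζ t k s := by
  have ht' : (0:ℝ) < 4 * t := by linarith
  have e0 : r * s / (2 * t) / 2 = r / (4 * t) * s := by field_simp; ring
  have e1 : (r / (4 * t) * s) ^ (2 * (k : ℝ) + (ζ - 1 / 2)) =
      (r / (4 * t)) ^ (2 * (k : ℝ) + (ζ - 1 / 2)) * s ^ (2 * (k : ℝ) + (ζ - 1 / 2)) :=
    Real.mul_rpow (by positivity) hs.le
  have e2 : (r * s) ^ ((1:ℝ) / 2 - ζ) = r ^ ((1:ℝ) / 2 - ζ) * s ^ ((1:ℝ) / 2 - ζ) :=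
    Real.mul_rpow hr.le hs.le
  have e3 : Real.exp (-(r ^ 2 + s ^ 2) / (4 * t)) =
      Real.exp (-(r ^ 2 / (4 * t))) * Real.exp (-(1 / (4 * t)) * s ^ 2) := by
    rw [← Real.exp_add]; congr 1; field_simp; ring
  have e4 : s ^ ((1:ℝ) / 2 - ζ) * s ^ (2 * (k : ℝ) + (ζ - 1 / 2)) * s ^ (2 * ζ) =
      s ^ (2 * (k : ℝ) + 2 * ζ) := by
    rw [← Real.rpow_add hs, ← Real.rpow_add hs]; congr 1; ring
  rw [e0, e1, e2, e3]
  unfold Dk gk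
  rw [← e4]
  ring

lemma besselHeat_eq_tsum (hζ : -1/2 < ζ) (ht : 0 < t) (hr : 0 < r) {s : ℝ} (hs : 0 < s) :
    besselHeat ζ t r s * s ^ (2 * ζ) = ∑' k : ℕ, Dk ζ t r k * gk ζ t k s := by
  unfold besselHeat besselI
  rw [show ζ - 1 / 2 = ζ - 1 / 2 from rfl]
  calc (r * s) ^ ((1 : ℝ) / 2 - ζ) / (2 * t) * Real.exp (-(r ^ 2 + s ^ 2) / (4 * t)) *
        (∑' k : ℕ, (r * s / (2 * t) / 2) ^ (2 * (k : ℝ) + (ζ - 1 / 2)) /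
          ((Nat.factorial k : ℝ) * Real.Gamma ((k : ℝ) + (ζ - 1 / 2) + 1))) * s ^ (2 * ζ)
      = ∑' k : ℕ, (r * s) ^ ((1 : ℝ) / 2 - ζ) / (2 * t) * Real.exp (-(r ^ 2 + s ^ 2) / (4 * t)) *
          s ^ (2 * ζ) *
          ((r * s / (2 * t) / 2) ^ (2 * (k : ℝ) + (ζ - 1 / 2)) /
            ((Nat.factorial k : ℝ) * Real.Gamma ((k : ℝ) + (ζ - 1 / 2) + 1))) := by
        rw [tsum_mul_left]; ring
    _ = ∑' k : ℕ, Dk ζ t r k * gk ζ t k s := tsum_congr (fun k => hterm hζ ht hr hs k)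

end

section
variable {ζ t r : ℝ}

lemma summable_Dg (hζ : -1/2 < ζ) (ht : 0 < t) (hr : 0 < r) {s : ℝ} (hs : 0 < s) :
    Summable (fun k : ℕ => Dk ζ t r k * gk ζ t k s) := by
  apply Summable.congr (f := fun k : ℕ =>
    (r * s) ^ ((1 : ℝ) / 2 - ζ) / (2 * t) * Real.exp (-(r ^ 2 + s ^ 2) / (4 * t)) * s ^ (2 * ζ) *
      ((r * s / (2 * t) / 2) ^ (2 * (k : ℝ) + (ζ - 1 / 2)) /
        ((Nat.factorial k : ℝ) * Real.Gamma ((k : ℝ) + (ζ - 1 / 2) + 1))))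
  · exact (bessel_summable (ζ - 1/2) (r * s / (2 * t))).mul_left _
  · exact fun k => hterm hζ ht hr hs k

lemma gk_integrable (hζ : -1/2 < ζ) (ht : 0 < t) (k : ℕ) :
    IntegrableOn (gk ζ t k) (Ioi 0) volume := by
  have hb : (0:ℝ) < 1 / (4 * t) := by positivity
  have hq : (-1:ℝ) < 2 * (k : ℝ) + 2 * ζ := by
    have : (0:ℝ) ≤ (k : ℝ) := Nat.cast_nonneg k
    linarith
  exact integrableOn_rpow_mul_exp_neg_mul_sq hb hq

lemma gk_integral (hζ : -1/2 < ζ) (ht : 0 < t) (k : ℕ) :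
    ∫ s in Ioi (0:ℝ), gk ζ t k s =
      (1 / (4 * t)) ^ (-(2 * (k : ℝ) + 2 * ζ + 1) / 2) * (1 / 2) *
        Real.Gamma ((2 * (k : ℝ) + 2 * ζ + 1) / 2) := by
  have hb : (0:ℝ) < 1 / (4 * t) := by positivity
  have hq : (-1:ℝ) < 2 * (k : ℝ) + 2 * ζ := by
    have : (0:ℝ) ≤ (k : ℝ) := Nat.cast_nonneg k
    linarith
  rw [← integral_rpow_mul_exp_neg_mul_rpow two_pos hq hb]
  apply setIntegral_congr_fun measurableSet_Ioi
  intro x hx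
  unfold gk
  congr 2
  rw [show ((2:ℝ) = ((2:ℕ):ℝ)) by norm_num, Real.rpow_natCast]

lemma DV (hζ : -1/2 < ζ) (ht : 0 < t) (hr : 0 < r) (k : ℕ) :
    Dk ζ t r k * ((1 / (4 * t)) ^ (-(2 * (k : ℝ) + 2 * ζ + 1) / 2) * (1 / 2) *
        Real.Gamma ((2 * (k : ℝ) + 2 * ζ + 1) / 2))
      = Real.exp (-(r ^ 2 / (4 * t))) * ((r ^ 2 / (4 * t)) ^ k / (Nat.factorial k : ℝ)) := by
  have ht' : (0:ℝ) < 4 * t := by linarith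
  have hΓ := Gamma_pos' hζ k
  have hfac : (0:ℝ) < (Nat.factorial k : ℝ) := by positivity
  -- identify the Gamma argument
  have eΓ : (2 * (k : ℝ) + 2 * ζ + 1) / 2 = (k : ℝ) + (ζ - 1 / 2) + 1 := by ring
  rw [eΓ]
  have c1 : (1 / (4 * t)) ^ (-(2 * (k : ℝ) + 2 * ζ + 1) / 2)
      = (4 * t) ^ ((2 * (k : ℝ) + 2 * ζ + 1) / 2) := by
    rw [one_div, Real.inv_rpow ht'.le, ← Real.rpow_neg ht'.le]
    congr 1
    ring
  have c2 : (4 * t) ^ ((2 * (k : ℝ) + 2 * ζ + 1) / 2)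
      = (4 * t) ^ (2 * (k : ℝ) + (ζ - 1 / 2)) * (4 * t) ^ ((1:ℝ) - (k : ℝ)) := by
    rw [← Real.rpow_add ht']; congr 1; ring
  have c3 : (4 * t) ^ ((1:ℝ) - (k : ℝ)) = (4 * t) * ((4 * t : ℝ) ^ (k : ℕ))⁻¹ := by
    rw [Real.rpow_sub ht', Real.rpow_one, Real.rpow_natCast, div_eq_mul_inv]
  have c4 : (r / (4 * t)) ^ (2 * (k : ℝ) + (ζ - 1 / 2))
      = r ^ (2 * (k : ℝ) + (ζ - 1 / 2)) / (4 * t) ^ (2 * (k : ℝ) + (ζ - 1 / 2)) :=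
    Real.div_rpow hr.le ht'.le _
  have c5 : r ^ (2 * (k : ℝ) + (ζ - 1 / 2)) = (r ^ 2) ^ k * r ^ (ζ - 1 / 2) := by
    rw [Real.rpow_add hr]
    congr 1
    rw [show (2 * (k : ℝ)) = ((2 * k : ℕ) : ℝ) by push_cast; ring, Real.rpow_natCast, pow_mul]
  have c6 : r ^ ((1:ℝ) / 2 - ζ) = (r ^ (ζ - 1 / 2))⁻¹ := by
    rw [← Real.rpow_neg hr.le]
    congr 1
    ring
  have hane : (4 * t) ^ (2 * (k : ℝ) + (ζ - 1 / 2)) ≠ 0 := by positivity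
  have hrne : r ^ (ζ - 1 / 2) ≠ 0 := by positivity
  have h4tk : ((4 * t : ℝ) ^ (k : ℕ)) ≠ 0 := by positivity
  have hΓne : Real.Gamma ((k : ℝ) + (ζ - 1 / 2) + 1) ≠ 0 := ne_of_gt hΓ
  have hfacne : (Nat.factorial k : ℝ) ≠ 0 := ne_of_gt hfac
  have htne : t ≠ 0 := ne_of_gt ht
  unfold Dk
  rw [c1, c2, c3, c4, c5, c6, div_pow]
  set u := r ^ (ζ - 1 / 2) with hu
  set a := (4 * t) ^ (2 * (k : ℝ) + (ζ - 1 / 2)) with ha2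
  set b := ((4 * t : ℝ) ^ (k : ℕ)) with hb2
  set G := Real.Gamma ((k : ℝ) + (ζ - 1 / 2) + 1) with hG2
  field_simp
  ring

end

section
variable {ζ t r : ℝ}

lemma exp_tsum (x : ℝ) : ∑' n : ℕ, x ^ n / (Nat.factorial n : ℝ) = Real.exp x := by
  rw [Real.exp_eq_exp_ℝ, NormedSpace.exp_eq_tsum_div]

lemma besselHeat_mass (hζ : -1/2 < ζ) (ht : 0 < t) (hr : 0 < r) :
    ∫⁻ s in Ioi (0:ℝ), ENNReal.ofReal (besselHeat ζ t r s * s ^ (2 * ζ)) = 1 := by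
  have key : ∀ᵐ s ∂(volume : Measure ℝ), s ∈ Ioi (0:ℝ) →
      ENNReal.ofReal (besselHeat ζ t r s * s ^ (2 * ζ))
      = ∑' k : ℕ, ENNReal.ofReal (Dk ζ t r k * gk ζ t k s) := by
    refine ae_of_all _ (fun s hs => ?_)
    rw [besselHeat_eq_tsum hζ ht hr hs, ENNReal.ofReal_tsum_of_nonneg
      (fun k => mul_nonneg (Dk_nonneg hζ ht hr k) (gk_nonneg k (le_of_lt hs)))
      (summable_Dg hζ ht hr hs)]
  rw [setLIntegral_congr_fun_ae measurableSet_Ioi key]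
  rw [lintegral_tsum (fun k => Measurable.aemeasurable
    (by unfold gk; fun_prop : Measurable (fun s => ENNReal.ofReal (Dk ζ t r k * gk ζ t k s))))]
  have step : ∀ k : ℕ, (∫⁻ s in Ioi (0:ℝ), ENNReal.ofReal (Dk ζ t r k * gk ζ t k s))
      = ENNReal.ofReal (Real.exp (-(r ^ 2 / (4 * t))) *
          ((r ^ 2 / (4 * t)) ^ k / (Nat.factorial k : ℝ))) := by
    intro k
    have hgnn : 0 ≤ᵐ[volume.restrict (Ioi (0:ℝ))] gk ζ t k :=
      (ae_restrict_iff' measurableSet_Ioi).2 (ae_of_all _ (fun s hs => gk_nonneg k (le_of_lt hs)))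
    calc (∫⁻ s in Ioi (0:ℝ), ENNReal.ofReal (Dk ζ t r k * gk ζ t k s))
        = ∫⁻ s in Ioi (0:ℝ), ENNReal.ofReal (Dk ζ t r k) * ENNReal.ofReal (gk ζ t k s) := by
          simp_rw [ENNReal.ofReal_mul (Dk_nonneg hζ ht hr k)]
      _ = ENNReal.ofReal (Dk ζ t r k) * ∫⁻ s in Ioi (0:ℝ), ENNReal.ofReal (gk ζ t k s) :=
          lintegral_const_mul' _ _ ENNReal.ofReal_ne_top
      _ = ENNReal.ofReal (Dk ζ t r k) * ENNReal.ofReal (∫ s in Ioi (0:ℝ), gk ζ t k s) := by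
          rw [ofReal_integral_eq_lintegral_ofReal (gk_integrable hζ ht k) hgnn]
      _ = ENNReal.ofReal (Dk ζ t r k * ((1 / (4 * t)) ^ (-(2 * (k : ℝ) + 2 * ζ + 1) / 2) * (1 / 2) *
            Real.Gamma ((2 * (k : ℝ) + 2 * ζ + 1) / 2))) := by
          rw [gk_integral hζ ht k, ← ENNReal.ofReal_mul (Dk_nonneg hζ ht hr k)]
      _ = ENNReal.ofReal (Real.exp (-(r ^ 2 / (4 * t))) *
            ((r ^ 2 / (4 * t)) ^ k / (Nat.factorial k : ℝ))) := by rw [DV hζ ht hr k]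
  rw [tsum_congr step]
  have hsum : Summable (fun k : ℕ => Real.exp (-(r ^ 2 / (4 * t))) *
      ((r ^ 2 / (4 * t)) ^ k / (Nat.factorial k : ℝ))) :=
    (Real.summable_pow_div_factorial _).mul_left _
  have hnn : ∀ k : ℕ, 0 ≤ Real.exp (-(r ^ 2 / (4 * t))) *
      ((r ^ 2 / (4 * t)) ^ k / (Nat.factorial k : ℝ)) := by
    intro k
    have : (0:ℝ) ≤ (r ^ 2 / (4 * t)) ^ k := by positivity
    positivity
  rw [← ENNReal.ofReal_tsum_of_nonneg hnn hsum, tsum_mul_left, exp_tsum, ← Real.exp_add]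
  norm_num

end

lemma ofReal_integral_le_lintegral {μ : Measure ℝ} {g : ℝ → ℝ} (hg : 0 ≤ᵐ[μ] g) :
    ENNReal.ofReal (∫ x, g x ∂μ) ≤ ∫⁻ x, ENNReal.ofReal (g x) ∂μ := by
  by_cases h : Integrable g μ
  · exact le_of_eq (ofReal_integral_eq_lintegral_ofReal h hg)
  · rw [integral_undef h]
    simp

/-- `σ` is a family of `α/2`-stable subordinator densities. -/
def IsStableSubordinatorDensity (α : ℝ) (σ : ℝ → ℝ → ℝ) : Prop :=
  (∀ t, 0 < t → ∀ τ, 0 < τ → 0 ≤ σ t τ) ∧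
  (∀ t, 0 < t → Measurable (σ t)) ∧
  (∀ t l : ℝ, 0 < t → 0 ≤ l →
    (∫ τ in Ioi (0 : ℝ), Real.exp (-τ * l) * σ t τ) = Real.exp (-t * l ^ (α / 2)))

/-- The `α/2`-subordinated Bessel heat kernel `p_ζ^{(α)}(t,r,s)`. -/
noncomputable def subKernel (ζ : ℝ) (σ : ℝ → ℝ → ℝ) (t r s : ℝ) : ℝ :=
  ∫ τ in Ioi (0 : ℝ), besselHeat ζ τ r s * σ t τ

section
variable {ζ α t r : ℝ} {σ : ℝ → ℝ → ℝ}

lemma subKernel_symm (ζ : ℝ) (σ : ℝ → ℝ → ℝ) (t r s : ℝ) :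
    subKernel ζ σ t r s = subKernel ζ σ t s r := by
  unfold subKernel
  refine integral_congr_ae (ae_of_all _ (fun τ => ?_))
  show besselHeat ζ τ r s * σ t τ = besselHeat ζ τ s r * σ t τ
  rw [besselHeat_symm]

lemma subKernel_nonneg (hζ : -1/2 < ζ) (hσ : IsStableSubordinatorDensity α σ) (ht : 0 < t)
    {r s : ℝ} (hr : 0 ≤ r) (hs : 0 ≤ s) : 0 ≤ subKernel ζ σ t r s := by
  unfold subKernel
  apply setIntegral_nonneg measurableSet_Ioi
  intro τ hτ
  exact mul_nonneg (besselHeat_nonneg hζ hτ hr hs) (hσ.1 t ht τ hτ)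

set_option maxHeartbeats 1000000 in
lemma measurable_subKernel (hσmeas : Measurable (σ t)) :
    Measurable (fun q : ℝ × ℝ => subKernel ζ σ t q.1 q.2) := by
  have hmap : Measurable (fun z : (ℝ × ℝ) × ℝ => ((z.2, z.1.1, z.1.2) : ℝ × ℝ × ℝ)) :=
    measurable_snd.prodMk (measurable_fst.fst.prodMk measurable_fst.snd)
  have hb : Measurable (fun z : (ℝ × ℝ) × ℝ => besselHeat ζ z.2 z.1.1 z.1.2) :=
    (measurable_besselHeat ζ).comp hmap
  have h : StronglyMeasurable (fun z : (ℝ × ℝ) × ℝ => besselHeat ζ z.2 z.1.1 z.1.2 * σ t z.2) :=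
    (hb.mul (hσmeas.comp measurable_snd)).stronglyMeasurable
  unfold subKernel
  exact h.integral_prod_right'.measurable

lemma subKernel_mass (hζ : -1/2 < ζ) (hσ : IsStableSubordinatorDensity α σ) (hα0 : 0 < α)
    (ht : 0 < t) (hr : 0 < r) :
    ∫⁻ s in Ioi (0:ℝ), ENNReal.ofReal (subKernel ζ σ t r s * s ^ (2 * ζ)) ≤ 1 := by
  obtain ⟨hnn, hmeas, hlap⟩ := hσ
  have hσint : ∫ τ in Ioi (0:ℝ), σ t τ = 1 := by
    have h := hlap t 0 ht le_rfl
    rw [Real.zero_rpow (by positivity : (0:ℝ) < α / 2).ne', mul_zero, Real.exp_zero] at h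
    simpa using h
  have hσinteg : IntegrableOn (σ t) (Ioi 0) volume := by
    by_contra hcon
    rw [integral_undef hcon] at hσint
    norm_num at hσint
  have hσnn : 0 ≤ᵐ[volume.restrict (Ioi (0:ℝ))] σ t :=
    (ae_restrict_iff' measurableSet_Ioi).2 (ae_of_all _ (fun τ hτ => hnn t ht τ hτ))
  have hσlint : ∫⁻ τ in Ioi (0:ℝ), ENNReal.ofReal (σ t τ) = 1 := by
    rw [← ofReal_integral_eq_lintegral_ofReal hσinteg hσnn, hσint, ENNReal.ofReal_one]
  have hpt : ∀ s ∈ Ioi (0:ℝ), ENNReal.ofReal (subKernel ζ σ t r s * s ^ (2 * ζ)) ≤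
      ∫⁻ τ in Ioi (0:ℝ), ENNReal.ofReal (σ t τ) *
        ENNReal.ofReal (besselHeat ζ τ r s * s ^ (2 * ζ)) := by
    intro s hs
    have heq : subKernel ζ σ t r s * s ^ (2 * ζ)
        = ∫ τ in Ioi (0:ℝ), besselHeat ζ τ r s * σ t τ * s ^ (2 * ζ) := by
      rw [subKernel, ← integral_mul_const]
    rw [heq]
    have hae : 0 ≤ᵐ[volume.restrict (Ioi (0:ℝ))]
        (fun τ => besselHeat ζ τ r s * σ t τ * s ^ (2 * ζ)) := by
      refine (ae_restrict_iff' measurableSet_Ioi).2 (ae_of_all _ (fun τ hτ => ?_))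
      have h1 := besselHeat_nonneg hζ hτ hr.le (le_of_lt hs)
      have h2 := hnn t ht τ hτ
      have h3 : (0:ℝ) ≤ s ^ (2 * ζ) := Real.rpow_nonneg (le_of_lt hs) _
      positivity
    refine le_trans (ofReal_integral_le_lintegral hae) (le_of_eq ?_)
    refine setLIntegral_congr_fun measurableSet_Ioi (fun τ hτ => ?_)
    rw [← ENNReal.ofReal_mul (hnn t ht τ hτ)]
    congr 1
    ring
  calc ∫⁻ s in Ioi (0:ℝ), ENNReal.ofReal (subKernel ζ σ t r s * s ^ (2 * ζ))
      ≤ ∫⁻ s in Ioi (0:ℝ), ∫⁻ τ in Ioi (0:ℝ), ENNReal.ofReal (σ t τ) *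
          ENNReal.ofReal (besselHeat ζ τ r s * s ^ (2 * ζ)) :=
        lintegral_mono_ae ((ae_restrict_iff' measurableSet_Ioi).2 (ae_of_all _ hpt))
    _ = ∫⁻ τ in Ioi (0:ℝ), ∫⁻ s in Ioi (0:ℝ), ENNReal.ofReal (σ t τ) *
          ENNReal.ofReal (besselHeat ζ τ r s * s ^ (2 * ζ)) := by
        apply lintegral_lintegral_swap
        apply Measurable.aemeasurable
        have h1 : Measurable (fun z : ℝ × ℝ => σ t z.2) := (hmeas t ht).comp measurable_snd
        have h2 : Measurable (fun z : ℝ × ℝ => besselHeat ζ z.2 r z.1) :=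
          (measurable_besselHeat ζ).comp
            (measurable_snd.prodMk (measurable_const.prodMk measurable_fst))
        have h3 : Measurable (fun z : ℝ × ℝ => z.1 ^ (2 * ζ)) := by fun_prop
        exact (ENNReal.measurable_ofReal.comp h1).mul
          (ENNReal.measurable_ofReal.comp (h2.mul h3))
    _ = ∫⁻ τ in Ioi (0:ℝ), ENNReal.ofReal (σ t τ) *
          ∫⁻ s in Ioi (0:ℝ), ENNReal.ofReal (besselHeat ζ τ r s * s ^ (2 * ζ)) := by
        refine lintegral_congr (fun τ => ?_)
        exact lintegral_const_mul' _ _ ENNReal.ofReal_ne_top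
    _ = ∫⁻ τ in Ioi (0:ℝ), ENNReal.ofReal (σ t τ) := by
        refine setLIntegral_congr_fun measurableSet_Ioi (fun τ hτ => ?_)
        rw [besselHeat_mass hζ hτ hr, mul_one]
    _ ≤ 1 := le_of_eq hσlint

end

/-- `p` is the kernel `p_ζ^{(α)}` for `α ∈ (0,2]`: the Bessel heat kernel itself when `α = 2`,
and the `α/2`-subordinated kernel when `α < 2`. -/
def IsSubordinatedBesselKernel (ζ α : ℝ) (p : ℝ → ℝ → ℝ → ℝ) : Prop :=
  (α = 2 ∧ ∀ t r s : ℝ, p t r s = besselHeat ζ t r s) ∨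
  (α < 2 ∧ ∃ σ : ℝ → ℝ → ℝ, IsStableSubordinatorDensity α σ ∧
    ∀ t r s : ℝ, p t r s = subKernel ζ σ t r s)

set_option maxHeartbeats 1000000 in
theorem stmt9 (ζ α : ℝ) (hζ : -1/2 < ζ) (hα0 : 0 < α) (hα2 : α ≤ 2)
    (p : ℝ → ℝ → ℝ → ℝ) (hp : IsSubordinatedBesselKernel ζ α p)
    (t : ℝ) (ht : 0 < t) (f : ℝ → ℝ) (hf : Measurable f)
    (hf2 : Integrable (fun s => f s ^ 2 * s ^ (2 * ζ)) (volume.restrict (Ioi 0))) :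
    (∫ r in Ioi (0 : ℝ), (∫ s in Ioi (0 : ℝ), p t r s * f s * s ^ (2 * ζ)) ^ 2 * r ^ (2 * ζ))
      ≤ ∫ s in Ioi (0 : ℝ), f s ^ 2 * s ^ (2 * ζ) := by
  -- kernel properties
  have hsymm : ∀ r s : ℝ, p t r s = p t s r := by
    rcases hp with ⟨_, hp2⟩ | ⟨_, σ', hσ', hp2⟩
    · intro r s; rw [hp2, hp2, besselHeat_symm]
    · intro r s; rw [hp2, hp2, subKernel_symm]
  have hnn : ∀ r s : ℝ, 0 < r → 0 < s → 0 ≤ p t r s := by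
    rcases hp with ⟨_, hp2⟩ | ⟨_, σ', hσ', hp2⟩
    · intro r s hr hs; rw [hp2]; exact besselHeat_nonneg hζ ht hr.le hs.le
    · intro r s hr hs; rw [hp2]; exact subKernel_nonneg hζ hσ' ht hr.le hs.le
  have hmeas : Measurable (fun q : ℝ × ℝ => p t q.1 q.2) := by
    rcases hp with ⟨_, hp2⟩ | ⟨_, σ', hσ', hp2⟩
    · simp only [hp2]
      exact (measurable_besselHeat ζ).comp (measurable_const.prodMk measurable_id)
    · simp only [hp2]
      exact measurable_subKernel (hσ'.2.1 t ht)
  have hmass : ∀ r : ℝ, 0 < r →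
      ∫⁻ s in Ioi (0:ℝ), ENNReal.ofReal (p t r s * s ^ (2 * ζ)) ≤ 1 := by
    rcases hp with ⟨_, hp2⟩ | ⟨hα, σ', hσ', hp2⟩
    · intro r hr; simp only [hp2]; exact le_of_eq (besselHeat_mass hζ ht hr)
    · intro r hr; simp only [hp2]; exact subKernel_mass hζ hσ' hα0 ht hr
  clear hp hα0 hα2
  set μ := volume.restrict (Ioi (0:ℝ)) with hμdef
  -- basic nonnegativity facts
  have hf2nn : 0 ≤ᵐ[μ] fun s => f s ^ 2 * s ^ (2 * ζ) := by
    refine (ae_restrict_iff' measurableSet_Ioi).2 (ae_of_all _ (fun s hs => ?_))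
    have h0 : (0:ℝ) ≤ s ^ (2 * ζ) := Real.rpow_nonneg (le_of_lt hs) _
    positivity
  have hRHSnn : 0 ≤ ∫ s, f s ^ 2 * s ^ (2 * ζ) ∂μ := integral_nonneg_of_ae hf2nn
  have hRHS : (∫⁻ s, ENNReal.ofReal (f s ^ 2 * s ^ (2 * ζ)) ∂μ)
      = ENNReal.ofReal (∫ s, f s ^ 2 * s ^ (2 * ζ) ∂μ) :=
    (ofReal_integral_eq_lintegral_ofReal hf2 hf2nn).symm
  -- measurability helpers
  have hmeas2 : Measurable (fun q : ℝ × ℝ => p t q.1 q.2 * f q.2 * q.2 ^ (2 * ζ)) := by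
    have hfm : Measurable (fun q : ℝ × ℝ => f q.2) := hf.comp measurable_snd
    have hrm : Measurable (fun q : ℝ × ℝ => q.2 ^ (2 * ζ)) := by fun_prop
    exact (hmeas.mul hfm).mul hrm
  have hsec : ∀ r : ℝ, Measurable (fun s => p t r s) :=
    fun r => hmeas.comp (measurable_const.prodMk measurable_id)
  have hinner_meas : Measurable (fun r => ∫ s, p t r s * f s * s ^ (2 * ζ) ∂μ) :=
    hmeas2.stronglyMeasurable.integral_prod_right'.measurable
  -- pointwise Cauchy-Schwarz bound
  have claim1 : ∀ r : ℝ, r ∈ Ioi (0:ℝ) →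
      ENNReal.ofReal ((∫ s, p t r s * f s * s ^ (2 * ζ) ∂μ) ^ 2 * r ^ (2 * ζ))
      ≤ (∫⁻ s, ENNReal.ofReal (p t r s * f s ^ 2 * s ^ (2 * ζ)) ∂μ) *
          ENNReal.ofReal (r ^ (2 * ζ)) := by
    intro r hr
    have hφm : Measurable (fun s => ENNReal.ofReal (p t r s * s ^ (2 * ζ))) := by
      have := hsec r; fun_prop
    have hψm : Measurable (fun s => ENNReal.ofReal |f s|) := by fun_prop
    set φ : ℝ → ENNReal := fun s => ENNReal.ofReal (p t r s * s ^ (2 * ζ)) with hφdef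
    set I : ℝ := ∫ s, p t r s * f s * s ^ (2 * ζ) ∂μ with hIdef
    set G : ENNReal := ∫⁻ s, φ s * ENNReal.ofReal |f s| ∂μ with hGdef
    -- |I| ≤ G.toReal
    have habs : |I| ≤ G.toReal := by
      have h1 := norm_integral_le_integral_norm (μ := μ) (fun s => p t r s * f s * s ^ (2 * ζ))
      simp only [Real.norm_eq_abs] at h1
      have h2 : (∫ s, |p t r s * f s * s ^ (2 * ζ)| ∂μ)
          = (∫⁻ s, ENNReal.ofReal (|p t r s * f s * s ^ (2 * ζ)|) ∂μ).toReal := by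
        apply integral_eq_lintegral_of_nonneg_ae (ae_of_all _ (fun s => abs_nonneg _))
        have hm : Measurable (fun s => p t r s * f s * s ^ (2 * ζ)) :=
          hmeas2.comp (measurable_const.prodMk measurable_id)
        exact hm.abs.aestronglyMeasurable
      have h4 : ∀ s : ℝ, s ∈ Ioi (0:ℝ) →
          ENNReal.ofReal (|p t r s * f s * s ^ (2 * ζ)|) = φ s * ENNReal.ofReal |f s| := by
        intro s hs
        have h5 : |p t r s * f s * s ^ (2 * ζ)| = p t r s * s ^ (2 * ζ) * |f s| := by
          rw [abs_mul, abs_mul, abs_of_nonneg (hnn r s hr hs),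
            abs_of_nonneg (Real.rpow_nonneg (le_of_lt hs) _)]
          ring
        rw [h5, ENNReal.ofReal_mul (mul_nonneg (hnn r s hr hs)
          (Real.rpow_nonneg (le_of_lt hs) _))]
      have h3 : (∫⁻ s, ENNReal.ofReal (|p t r s * f s * s ^ (2 * ζ)|) ∂μ) = G :=
        lintegral_congr_ae ((ae_restrict_iff' measurableSet_Ioi).2 (ae_of_all _ h4))
      rw [h2, h3] at h1
      exact h1
    have hIG : ENNReal.ofReal |I| ≤ G :=
      le_trans (ENNReal.ofReal_le_ofReal habs) ENNReal.ofReal_toReal_le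
    -- Cauchy-Schwarz for G
    have hCS : G ^ 2 ≤ (∫⁻ s, φ s ∂μ) * ∫⁻ s, φ s * ENNReal.ofReal (f s ^ 2) ∂μ := by
      have hconj : Real.HolderConjugate 2 2 := Real.HolderConjugate.two_two
      have h12 : (0:ℝ) ≤ 1/2 := by norm_num
      have hCS0 := ENNReal.lintegral_mul_le_Lp_mul_Lq μ hconj
        (f := fun s => φ s ^ ((1:ℝ)/2)) (g := fun s => φ s ^ ((1:ℝ)/2) * ENNReal.ofReal |f s|)
        (by fun_prop) (by fun_prop)
      have e1 : ∀ s : ℝ, φ s ^ ((1:ℝ)/2) * (φ s ^ ((1:ℝ)/2) * ENNReal.ofReal |f s|)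
          = φ s * ENNReal.ofReal |f s| := by
        intro s
        rw [← mul_assoc, ← ENNReal.rpow_add_of_nonneg _ _ h12 h12]
        norm_num
      have e2 : ∀ s : ℝ, (φ s ^ ((1:ℝ)/2)) ^ (2:ℝ) = φ s := by
        intro s
        rw [← ENNReal.rpow_mul]
        norm_num
      have e3 : ∀ s : ℝ, (φ s ^ ((1:ℝ)/2) * ENNReal.ofReal |f s|) ^ (2:ℝ)
          = φ s * ENNReal.ofReal (f s ^ 2) := by
        intro s
        rw [ENNReal.mul_rpow_of_nonneg _ _ (by norm_num : (0:ℝ) ≤ 2), e2 s,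
          ENNReal.ofReal_rpow_of_nonneg (abs_nonneg _) (by norm_num : (0:ℝ) ≤ 2)]
        congr 1
        rw [show ((2:ℝ) = ((2:ℕ):ℝ)) by norm_num, Real.rpow_natCast, sq_abs]
      simp only [Pi.mul_apply, e1, e2, e3] at hCS0
      calc G ^ 2 ≤ ((∫⁻ s, φ s ∂μ) ^ ((1:ℝ)/2) *
            (∫⁻ s, φ s * ENNReal.ofReal (f s ^ 2) ∂μ) ^ ((1:ℝ)/2)) ^ 2 :=
          pow_le_pow_left' hCS0 2
      _ = (∫⁻ s, φ s ∂μ) * ∫⁻ s, φ s * ENNReal.ofReal (f s ^ 2) ∂μ := by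
          rw [mul_pow, ← ENNReal.rpow_natCast ((∫⁻ s, φ s ∂μ) ^ ((1:ℝ)/2)) 2,
            ← ENNReal.rpow_natCast ((∫⁻ s, φ s * ENNReal.ofReal (f s ^ 2) ∂μ) ^ ((1:ℝ)/2)) 2,
            ← ENNReal.rpow_mul, ← ENNReal.rpow_mul]
          norm_num
    -- assemble claim1
    have hof : ENNReal.ofReal (I ^ 2) ≤ G ^ 2 := by
      rw [← sq_abs I, ENNReal.ofReal_pow (abs_nonneg I)]
      exact pow_le_pow_left' hIG 2
    calc ENNReal.ofReal (I ^ 2 * r ^ (2 * ζ))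
        = ENNReal.ofReal (I ^ 2) * ENNReal.ofReal (r ^ (2 * ζ)) :=
          ENNReal.ofReal_mul (sq_nonneg I)
      _ ≤ G ^ 2 * ENNReal.ofReal (r ^ (2 * ζ)) := mul_le_mul_left hof _
      _ ≤ ((∫⁻ s, φ s ∂μ) * ∫⁻ s, φ s * ENNReal.ofReal (f s ^ 2) ∂μ) *
            ENNReal.ofReal (r ^ (2 * ζ)) := mul_le_mul_left hCS _
      _ ≤ (1 * ∫⁻ s, φ s * ENNReal.ofReal (f s ^ 2) ∂μ) *
            ENNReal.ofReal (r ^ (2 * ζ)) :=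
          mul_le_mul_left (mul_le_mul_left (hmass r hr) _) _
      _ = (∫⁻ s, φ s * ENNReal.ofReal (f s ^ 2) ∂μ) * ENNReal.ofReal (r ^ (2 * ζ)) := by
          rw [one_mul]
      _ = (∫⁻ s, ENNReal.ofReal (p t r s * f s ^ 2 * s ^ (2 * ζ)) ∂μ) *
            ENNReal.ofReal (r ^ (2 * ζ)) := by
          have e : ∀ s : ℝ, s ∈ Ioi (0:ℝ) → φ s * ENNReal.ofReal (f s ^ 2)
              = ENNReal.ofReal (p t r s * f s ^ 2 * s ^ (2 * ζ)) := by
            intro s hs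
            rw [hφdef]
            dsimp only
            rw [← ENNReal.ofReal_mul (mul_nonneg (hnn r s hr hs)
              (Real.rpow_nonneg (le_of_lt hs) _))]
            congr 1
            ring
          rw [lintegral_congr_ae ((ae_restrict_iff' measurableSet_Ioi).2 (ae_of_all _ e))]
  -- main chain
  have hLHSnn : 0 ≤ᵐ[μ] fun r => (∫ s, p t r s * f s * s ^ (2 * ζ) ∂μ) ^ 2 * r ^ (2 * ζ) :=
    (ae_restrict_iff' measurableSet_Ioi).2 (ae_of_all _ (fun r hr =>
      mul_nonneg (sq_nonneg _) (Real.rpow_nonneg (le_of_lt hr) _)))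
  have hLHSm : AEStronglyMeasurable
      (fun r => (∫ s, p t r s * f s * s ^ (2 * ζ) ∂μ) ^ 2 * r ^ (2 * ζ)) μ :=
    ((hinner_meas.pow_const 2).mul (by fun_prop : Measurable fun r : ℝ => r ^ (2 * ζ))).aestronglyMeasurable
  rw [integral_eq_lintegral_of_nonneg_ae hLHSnn hLHSm]
  have hswapm : AEMeasurable (Function.uncurry fun r s =>
      ENNReal.ofReal (p t r s * f s ^ 2 * s ^ (2 * ζ)) * ENNReal.ofReal (r ^ (2 * ζ)))
      (μ.prod μ) := by
    apply Measurable.aemeasurable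
    have hA : Measurable (fun q : ℝ × ℝ => p t q.1 q.2 * f q.2 ^ 2 * q.2 ^ (2 * ζ)) := by
      have h1 : Measurable fun q : ℝ × ℝ => f q.2 := hf.comp measurable_snd
      have h2 : Measurable fun q : ℝ × ℝ => q.2 ^ (2 * ζ) := by fun_prop
      exact (hmeas.mul (h1.pow_const 2)).mul h2
    have hB : Measurable (fun q : ℝ × ℝ => q.1 ^ (2 * ζ)) := by fun_prop
    exact (ENNReal.measurable_ofReal.comp hA).mul (ENNReal.measurable_ofReal.comp hB)
  have chain : (∫⁻ r, ENNReal.ofReal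
        ((∫ s, p t r s * f s * s ^ (2 * ζ) ∂μ) ^ 2 * r ^ (2 * ζ)) ∂μ)
      ≤ ENNReal.ofReal (∫ s, f s ^ 2 * s ^ (2 * ζ) ∂μ) := by
    calc (∫⁻ r, ENNReal.ofReal
          ((∫ s, p t r s * f s * s ^ (2 * ζ) ∂μ) ^ 2 * r ^ (2 * ζ)) ∂μ)
        ≤ ∫⁻ r, (∫⁻ s, ENNReal.ofReal (p t r s * f s ^ 2 * s ^ (2 * ζ)) ∂μ) *
            ENNReal.ofReal (r ^ (2 * ζ)) ∂μ :=
          lintegral_mono_ae ((ae_restrict_iff' measurableSet_Ioi).2 (ae_of_all _ claim1))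
      _ = ∫⁻ r, ∫⁻ s, ENNReal.ofReal (p t r s * f s ^ 2 * s ^ (2 * ζ)) *
            ENNReal.ofReal (r ^ (2 * ζ)) ∂μ ∂μ :=
          lintegral_congr (fun r => (lintegral_mul_const' _ _ ENNReal.ofReal_ne_top).symm)
      _ = ∫⁻ s, ∫⁻ r, ENNReal.ofReal (p t r s * f s ^ 2 * s ^ (2 * ζ)) *
            ENNReal.ofReal (r ^ (2 * ζ)) ∂μ ∂μ := lintegral_lintegral_swap hswapm
      _ ≤ ∫⁻ s, ENNReal.ofReal (f s ^ 2 * s ^ (2 * ζ)) ∂μ := by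
          refine lintegral_mono_ae ((ae_restrict_iff' measurableSet_Ioi).2
            (ae_of_all _ (fun s hs => ?_)))
          have e : ∀ r : ℝ, r ∈ Ioi (0:ℝ) →
              ENNReal.ofReal (p t r s * f s ^ 2 * s ^ (2 * ζ)) * ENNReal.ofReal (r ^ (2 * ζ))
              = ENNReal.ofReal (p t s r * r ^ (2 * ζ)) *
                ENNReal.ofReal (f s ^ 2 * s ^ (2 * ζ)) := by
            intro r hr
            rw [hsymm r s]
            rw [← ENNReal.ofReal_mul (mul_nonneg (mul_nonneg (hnn s r hs hr) (sq_nonneg _))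
              (Real.rpow_nonneg (le_of_lt hs) _)),
              ← ENNReal.ofReal_mul (mul_nonneg (hnn s r hs hr)
              (Real.rpow_nonneg (le_of_lt hr) _))]
            congr 1
            ring
          calc (∫⁻ r, ENNReal.ofReal (p t r s * f s ^ 2 * s ^ (2 * ζ)) *
                ENNReal.ofReal (r ^ (2 * ζ)) ∂μ)
              = ∫⁻ r, ENNReal.ofReal (p t s r * r ^ (2 * ζ)) *
                  ENNReal.ofReal (f s ^ 2 * s ^ (2 * ζ)) ∂μ :=
                lintegral_congr_ae ((ae_restrict_iff' measurableSet_Ioi).2 (ae_of_all _ e))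
            _ = (∫⁻ r, ENNReal.ofReal (p t s r * r ^ (2 * ζ)) ∂μ) *
                  ENNReal.ofReal (f s ^ 2 * s ^ (2 * ζ)) :=
                lintegral_mul_const' _ _ ENNReal.ofReal_ne_top
            _ ≤ 1 * ENNReal.ofReal (f s ^ 2 * s ^ (2 * ζ)) :=
                mul_le_mul_left (hmass s hs) _
            _ = ENNReal.ofReal (f s ^ 2 * s ^ (2 * ζ)) := one_mul _
      _ = ENNReal.ofReal (∫ s, f s ^ 2 * s ^ (2 * ζ) ∂μ) := hRHS
  calc (∫⁻ r, ENNReal.ofReal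
        ((∫ s, p t r s * f s * s ^ (2 * ζ) ∂μ) ^ 2 * r ^ (2 * ζ)) ∂μ).toReal
      ≤ (ENNReal.ofReal (∫ s, f s ^ 2 * s ^ (2 * ζ) ∂μ)).toReal :=
        ENNReal.toReal_mono ENNReal.ofReal_ne_top chain
    _ = ∫ s, f s ^ 2 * s ^ (2 * ζ) ∂μ := ENNReal.toReal_ofReal hRHSnn
end
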